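/- Let k_o > 0, let α : ℝ → ℝ be continuous and bounded, and let d : ℝ → ℝ be twice differentiable with d(0) > 0. Suppose the barrier ODE d''(t) = −k_o·d'(t)/d(t) − α(t) holds at every t ≥ 0 at which d(t) > 0. Then d(t) > 0 for all t ≥ 0. -/

import Mathlib

open Filter

/-- Item 1 of Lemma 1 (barrier lemma): under the barrier ODE
`d'' = -k_o * d'/d - α` with `α` continuous and bounded, `k_o > 0`, and
`d 0 > 0`, the distance `d` remains positive for all `t ≥ 0`. -/
theorem barrier_remains_positive
    (k_o : ℝ) (hk : 0 < k_o) (α d : ℝ → ℝ)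
    (hα_cont : Continuous α) (hα_bdd : ∃ M, ∀ t, |α t| ≤ M)
    (hd1 : Differentiable ℝ d) (hd2 : Differentiable ℝ (deriv d))
    (hd0 : 0 < d 0)
    (hode : ∀ t ≥ (0:ℝ), 0 < d t →
      deriv (deriv d) t = -k_o * deriv d t / d t - α t) :
    ∀ t ≥ (0:ℝ), 0 < d t := by
  by_contra hcon
  push_neg at hcon
  obtain ⟨t₀, ht₀, hdt₀⟩ := hcon
  obtain ⟨M, hM⟩ := hα_bdd
  have hM0 : 0 ≤ M := le_trans (abs_nonneg _) (hM 0)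
  have hdc : Continuous d := hd1.continuous
  set S : Set ℝ := Set.Ici 0 ∩ d ⁻¹' Set.Iic 0 with hS
  have hSne : S.Nonempty := ⟨t₀, ht₀, hdt₀⟩
  have hSclosed : IsClosed S := isClosed_Ici.inter (isClosed_Iic.preimage hdc)
  have hSbdd : BddBelow S := ⟨0, fun x hx => hx.1⟩
  set T : ℝ := sInf S with hT
  have hTmem : T ∈ S := hSclosed.csInf_mem hSne hSbdd
  have hT0 : 0 ≤ T := hTmem.1
  have hdT : d T ≤ 0 := hTmem.2
  have hpos : ∀ t, 0 ≤ t → t < T → 0 < d t := by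
    intro t ht htT
    by_contra h
    push_neg at h
    exact absurd (csInf_le hSbdd ⟨ht, h⟩) (not_le.mpr htT)
  have hTne : (0:ℝ) < T := by
    rcases lt_or_eq_of_le hT0 with h | h
    · exact h
    · exfalso; rw [← h] at hdT; linarith
  -- derivative of w = d' + k_o log d is -α on [0, T)
  have hw : ∀ t, 0 ≤ t → t < T →
      HasDerivAt (fun s => deriv d s + k_o * Real.log (d s)) (-α t) t := by
    intro t ht htT
    have hdt : 0 < d t := hpos t ht htT
    have h1 : HasDerivAt (deriv d) (deriv (deriv d) t) t := (hd2 t).hasDerivAt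
    have h2 : HasDerivAt (fun s => Real.log (d s)) (deriv d t / d t) t :=
      (hd1 t).hasDerivAt.log hdt.ne'
    have h3 : HasDerivAt (fun s => deriv d s + k_o * Real.log (d s))
        (deriv (deriv d) t + k_o * (deriv d t / d t)) t := h1.add (h2.const_mul k_o)
    convert h3 using 1
    rw [hode t ht hdt]
    field_simp
    ring
  -- integral identity on [0, T)
  have hwint : ∀ t, 0 ≤ t → t < T →
      deriv d t + k_o * Real.log (d t)
        = deriv d 0 + k_o * Real.log (d 0) - ∫ s in (0:ℝ)..t, α s := by
    intro t ht htT
    have hkey : (∫ s in (0:ℝ)..t, -α s)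
        = (deriv d t + k_o * Real.log (d t)) - (deriv d 0 + k_o * Real.log (d 0)) := by
      apply intervalIntegral.integral_eq_sub_of_hasDerivAt
      · intro x hx
        rw [Set.uIcc_of_le ht] at hx
        exact hw x hx.1 (lt_of_le_of_lt hx.2 htT)
      · exact (hα_cont.neg).intervalIntegrable 0 t
    rw [intervalIntegral.integral_neg] at hkey
    linarith
  -- bound on the integral
  have hintbd : ∀ t, 0 ≤ t → t ≤ T → |∫ s in (0:ℝ)..t, α s| ≤ M * T := by
    intro t ht htT
    have := intervalIntegral.norm_integral_le_of_norm_le_const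
      (a := 0) (b := t) (C := M) (f := α) (fun x _ => by
        simpa [Real.norm_eq_abs] using hM x)
    rw [Real.norm_eq_abs] at this
    calc |∫ s in (0:ℝ)..t, α s| ≤ M * |t - 0| := this
      _ = M * t := by rw [sub_zero, abs_of_nonneg ht]
      _ ≤ M * T := by nlinarith
  set w0 : ℝ := deriv d 0 + k_o * Real.log (d 0) with hw0
  set c : ℝ := (w0 - M * T - 1) / k_o with hc
  set ε : ℝ := min (d 0) (Real.exp c) with hε
  have hεpos : 0 < ε := lt_min hd0 (Real.exp_pos c)
  set A : Set ℝ := Set.Icc 0 T ∩ {t | ε ≤ d t} with hA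
  have hAne : A.Nonempty := ⟨0, ⟨le_refl 0, hT0⟩, show ε ≤ d 0 from min_le_left _ _⟩
  have hAclosed : IsClosed A := isClosed_Icc.inter (isClosed_le continuous_const hdc)
  have hAbdd : BddAbove A := ⟨T, fun x hx => hx.1.2⟩
  set t₁ : ℝ := sSup A with ht₁
  have ht₁mem : t₁ ∈ A := hAclosed.csSup_mem hAne hAbdd
  have ht₁0 : 0 ≤ t₁ := ht₁mem.1.1
  have ht₁T : t₁ ≤ T := ht₁mem.1.2
  have hdt₁ : ε ≤ d t₁ := ht₁mem.2
  have ht₁ltT : t₁ < T := by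
    rcases lt_or_eq_of_le ht₁T with h | h
    · exact h
    · exfalso; rw [h] at hdt₁; linarith
  -- derivative is positive on (t₁, T)
  have hderivpos : ∀ t ∈ Set.Ioo t₁ T, 0 < deriv d t := by
    intro t ht
    have ht0 : 0 ≤ t := le_trans ht₁0 ht.1.le
    have hdtpos : 0 < d t := hpos t ht0 ht.2
    have hdtε : d t < ε := by
      by_contra h
      push_neg at h
      have : t ∈ A := ⟨⟨ht0, ht.2.le⟩, h⟩
      exact absurd (le_csSup hAbdd this) (not_le.mpr ht.1)
    have hlog : Real.log (d t) < c := by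
      have h := Real.log_lt_log hdtpos (lt_of_lt_of_le hdtε (min_le_right _ _))
      rwa [Real.log_exp] at h
    have hkc : k_o * c = w0 - M * T - 1 := by
      rw [hc]; field_simp
    have hint := hintbd t ht0 ht.2.le
    have heq := hwint t ht0 ht.2
    have h1 : k_o * Real.log (d t) < k_o * c := by
      exact mul_lt_mul_of_pos_left hlog hk
    have h2 : |∫ s in (0:ℝ)..t, α s| ≤ M * T := hint
    have h3 : (∫ s in (0:ℝ)..t, α s) ≤ M * T := le_trans (le_abs_self _) h2
    linarith
  have hmono : StrictMonoOn d (Set.Icc t₁ T) := by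
    apply strictMonoOn_of_deriv_pos (convex_Icc t₁ T) hdc.continuousOn
    intro x hx
    rw [interior_Icc] at hx
    exact hderivpos x hx
  have : d t₁ < d T :=
    hmono ⟨le_refl t₁, ht₁T⟩ ⟨ht₁T, le_refl T⟩ ht₁ltT
  linarith
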